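/- Completion implies freshness in read-ahead mode: in the TLA+ model, ProcessWriteCompletion(w) requires MaxCommittedWrite ≥ w (w is in the committed prefix, i.e., processed by all replicas); therefore, after a completion for w on object d is processed and d is removed from the dirty set, every replica's applied prefix contains w, and any subsequent single-replica read of d at any replica returns a write ≥ w. -/

import Mathlib

structure HWrite (O : Type) where
  switchNum : ℕ
  seq : ℕ
  item : O

def GTE {O : Type} (w1 w2 : HWrite O) : Prop :=
  w1.switchNum > w2.switchNum ∨ (w1.switchNum = w2.switchNum ∧ w1.seq ≥ w2.seq)

/-- Completion implies freshness in read-ahead mode. The guard of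
`ProcessWriteCompletion(w)` puts `w` in the committed prefix `L.take k`, where
`k = min_r cp r`; hence every replica's applied prefix `L.take (cp r)` contains
`w`, and any subsequent single-replica read of `w`'s object at any replica
(against an extended log `L'` and commit points `cp' r ≥ cp r`, since logs grow
by appending and commit points are non-decreasing) returns a write ≥ w. -/
theorem harmonia_completion_implies_freshness
    {O Rep : Type}
    (L : List (HWrite O)) (cp : Rep → ℕ) (k : ℕ)
    (hk : ∀ r, k ≤ cp r)                -- k = min over replicas of cp r
    (hcp : ∀ r, cp r ≤ L.length)
    (w : HWrite O)
    (hw : w ∈ L.take k) :               -- guard: w is in the committed prefix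
    (∀ r : Rep, w ∈ L.take (cp r)) ∧
    (∀ (L' : List (HWrite O)) (cp' : Rep → ℕ), L <+: L' → (∀ r, cp r ≤ cp' r) →
      ∀ (r : Rep) (ret : HWrite O),
        (ret ∈ L'.take (cp' r) ∧ ret.item = w.item ∧
          ∀ x ∈ L'.take (cp' r), x.item = w.item → GTE ret x) →
        GTE ret w) := by
  have hmem : ∀ n, k ≤ n → ∀ (L' : List (HWrite O)), L <+: L' → w ∈ L'.take n := by
    intro n hn L' hpre
    have h1 : L.take k <+: L'.take n := by
      calc L.take k <+: L'.take k := hpre.take k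
        _ <+: L'.take n := List.take_prefix_take_left (l := _) hn
    exact h1.subset hw
  refine ⟨fun r => hmem (cp r) (hk r) L List.prefix_rfl, ?_⟩
  intro L' cp' hpre hcp' r ret ⟨_, _, hmax⟩
  exact hmax w (hmem (cp' r) (le_trans (hk r) (hcp' r)) L' hpre) rfl
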